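/- arXiv:2305.12614 — 3 statements merged into one kernel-verified Lean document; each statement's English description precedes it below -/
import Mathlib

section
/- Let c, d > 0, w ∈ (0,1], L ∈ (0,1), a_0 > 0, b_0 > 0, and let (x_k)_{k≥1} be a sequence in [0,1] with x_k → L. Define recursively a_k = a_{k−1} + c·w·max(x_k − μ_{k−1}, 0) and b_k = b_{k−1} + d·w·max(μ_{k−1} − x_k, 0), where μ_k = a_k/(a_k + b_k). Then μ_k → L as k → ∞. -/
open Filter

section aux
variable {A B δ e X L S0 D : ℝ}

private lemma aux_log_ratio (hS0 : 0 < S0) (hS : S0 ≤ A + B) (hA : 0 < A) (hB : 0 < B)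
    (hδ : 0 ≤ δ) (hδD : δ ≤ D) :
    S0 / (S0 + D) * (Real.log (A + B + δ) - Real.log (A + B)) ≤ δ / (A + B + δ) := by
  set S := A + B with hSdef
  have hSpos : 0 < S := by positivity
  have hD : 0 ≤ D := hδ.trans hδD
  have h1 : Real.log (S + δ) - Real.log S ≤ δ / S := by
    rw [← Real.log_div (by positivity) (ne_of_gt hSpos)]
    have h := Real.log_le_sub_one_of_pos (x := (S + δ) / S) (by positivity)
    have h2 : (S + δ) / S - 1 = δ / S := by field_simp; ring
    linarith
  have h2 : S0 / (S0 + D) * (δ / S) ≤ δ / (S + δ) := by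
    rw [div_mul_div_comm, div_le_div_iff₀ (by positivity) (by positivity)]
    nlinarith [mul_le_mul hS hδD hδ hSpos.le]
  calc S0/(S0+D) * (Real.log (S+δ) - Real.log S) ≤ S0/(S0+D)*(δ/S) :=
        mul_le_mul_of_nonneg_left h1 (by positivity)
    _ ≤ δ/(S+δ) := h2

private lemma aux_up_mono (hA : 0 < A) (hB : 0 < B) (hδ : 0 ≤ δ) :
    A / (A + B) ≤ (A + δ) / (A + δ + B) := by
  rw [div_le_div_iff₀ (by positivity) (by positivity)]
  nlinarith

private lemma aux_down_mono (hA : 0 < A) (hB : 0 < B) (hδ : 0 ≤ δ) :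
    A / (A + (B + δ)) ≤ A / (A + B) := by
  apply div_le_div_of_nonneg_left hA.le (by positivity) (by linarith)

private lemma aux_up_drift (hA : 0 < A) (hB : 0 < B) (hδ : 0 ≤ δ) (hδD : δ ≤ D)
    (hS0 : 0 < S0) (hS : S0 ≤ A + B) (hL : A / (A + B) ≤ L) (hL1 : L ≤ 1) :
    (1 - L) * (S0 / (S0 + D)) * (Real.log (A + δ + B) - Real.log (A + B))
      ≤ (A + δ) / (A + δ + B) - A / (A + B) := by
  have hSpos : 0 < A + B := by positivity
  have heq : A + δ + B = A + B + δ := by ring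
  rw [heq]
  have hratio := aux_log_ratio hS0 hS hA hB hδ hδD
  have hBS : 1 - L ≤ B / (A + B) := by
    have h : (1:ℝ) - A/(A+B) = B/(A+B) := by field_simp; ring
    linarith
  have hdiff : (A + δ) / (A + B + δ) - A / (A + B) = (B / (A+B)) * (δ / (A + B + δ)) := by
    field_simp
    ring
  calc (1-L)*(S0/(S0+D))*(Real.log (A+B+δ) - Real.log (A+B))
      = (1-L)*((S0/(S0+D))*(Real.log (A+B+δ) - Real.log (A+B))) := by ring
    _ ≤ (1-L)*(δ/(A+B+δ)) := mul_le_mul_of_nonneg_left hratio (by linarith)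
    _ ≤ (B/(A+B))*(δ/(A+B+δ)) := mul_le_mul_of_nonneg_right hBS (by positivity)
    _ = (A + δ) / (A + B + δ) - A / (A + B) := hdiff.symm

private lemma aux_down_drift (hA : 0 < A) (hB : 0 < B) (hδ : 0 ≤ δ) (hδD : δ ≤ D)
    (hS0 : 0 < S0) (hS : S0 ≤ A + B) (hL0 : 0 ≤ L) (hL : L ≤ A / (A + B)) :
    L * (S0 / (S0 + D)) * (Real.log (A + (B + δ)) - Real.log (A + B))
      ≤ A / (A + B) - A / (A + (B + δ)) := by
  have hSpos : 0 < A + B := by positivity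
  have heq : A + (B + δ) = A + B + δ := by ring
  rw [heq]
  have hratio := aux_log_ratio hS0 hS hA hB hδ hδD
  have hdiff : A / (A + B) - A / (A + B + δ) = (A / (A+B)) * (δ / (A + B + δ)) := by
    field_simp
    ring
  calc L*(S0/(S0+D))*(Real.log (A+B+δ) - Real.log (A+B))
      = L*((S0/(S0+D))*(Real.log (A+B+δ) - Real.log (A+B))) := by ring
    _ ≤ L*(δ/(A+B+δ)) := mul_le_mul_of_nonneg_left hratio hL0
    _ ≤ (A/(A+B))*(δ/(A+B+δ)) := mul_le_mul_of_nonneg_right hL (by positivity)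
    _ = A / (A + B) - A / (A + B + δ) := hdiff.symm

private lemma aux_up_cap (hA : 0 < A) (hB : 0 < B) (he : 0 ≤ e) (heS : e ≤ A + B)
    (hX0 : 0 ≤ X) (hX1 : X ≤ 1) (hMX : A / (A + B) ≤ X) :
    (A + e * (X - A / (A + B))) / (A + e * (X - A / (A + B)) + B) ≤ X := by
  have hSpos : 0 < A + B := by positivity
  set M := A / (A + B) with hM
  have hAeq : A = M * (A + B) := by rw [hM]; field_simp
  have hδ0 : 0 ≤ e * (X - M) := mul_nonneg he (by linarith)
  rw [div_le_iff₀ (by linarith)]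
  nlinarith [mul_nonneg (sub_nonneg.2 hMX) (sub_nonneg.2 (show e*(1-X) ≤ A+B by nlinarith))]

private lemma aux_down_cap (hA : 0 < A) (hB : 0 < B) (he : 0 ≤ e) (heS : e ≤ A + B)
    (hX0 : 0 ≤ X) (hMX : X ≤ A / (A + B)) :
    X ≤ A / (A + (B + e * (A / (A + B) - X))) := by
  have hSpos : 0 < A + B := by positivity
  set M := A / (A + B) with hM
  have hM1 : M < 1 := by rw [hM, div_lt_one hSpos]; linarith
  have hAeq : A = M * (A + B) := by rw [hM]; field_simp
  have hδ0 : 0 ≤ e * (M - X) := mul_nonneg he (by linarith)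
  rw [le_div_iff₀ (by linarith)]
  nlinarith [mul_nonneg (sub_nonneg.2 hMX) (sub_nonneg.2 (show e*X ≤ A+B by nlinarith))]

end aux

set_option maxHeartbeats 1000000 in
/-- **Indirect-only trust dynamics track the communicated trust.** If communicated trust
values `x k ∈ [0,1]` converge to `L ∈ (0,1)` and the cumulative experiences update by
`a k = a (k−1) + c·w·(x k − μ (k−1))⁺` and `b k = b (k−1) + d·w·(μ (k−1) − x k)⁺`,
where `μ k = a k/(a k + b k)`, then the expected trust `μ k` converges to `L`. -/
theorem indirect_only_expected_trust_tendsto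
    (c d w L a0 b0 : ℝ) (hc : 0 < c) (hd : 0 < d) (hw : w ∈ Set.Ioc (0 : ℝ) 1)
    (hL : L ∈ Set.Ioo (0 : ℝ) 1) (ha0 : 0 < a0) (hb0 : 0 < b0)
    (x : ℕ → ℝ) (hx_mem : ∀ k, 1 ≤ k → x k ∈ Set.Icc (0 : ℝ) 1)
    (hx_lim : Tendsto x atTop (nhds L))
    (a b : ℕ → ℝ) (ha_init : a 0 = a0) (hb_init : b 0 = b0)
    (ha : ∀ k, 1 ≤ k →
      a k = a (k - 1) + c * w * max (x k - a (k - 1) / (a (k - 1) + b (k - 1))) 0)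
    (hb : ∀ k, 1 ≤ k →
      b k = b (k - 1) + d * w * max (a (k - 1) / (a (k - 1) + b (k - 1)) - x k) 0) :
    Tendsto (fun k => a k / (a k + b k)) atTop (nhds L) := by
  obtain ⟨hw0, hw1⟩ := hw
  obtain ⟨hL0, hL1⟩ := hL
  have hcw : 0 < c * w := mul_pos hc hw0
  have hdw : 0 < d * w := mul_pos hd hw0
  set μ : ℕ → ℝ := fun k => a k / (a k + b k) with hμdef
  have hμ : ∀ k, a k / (a k + b k) = μ k := fun k => rfl
  have hrec : ∀ k : ℕ, a (k+1) = a k + c * w * max (x (k+1) - μ k) 0 ∧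
      b (k+1) = b k + d * w * max (μ k - x (k+1)) 0 := by
    intro k
    have h1 := ha (k+1) (by omega)
    have h2 := hb (k+1) (by omega)
    simp only [Nat.add_sub_cancel, hμ] at h1 h2
    exact ⟨h1, h2⟩
  have hpos : ∀ k, 0 < a k ∧ 0 < b k := by
    intro k
    induction k with
    | zero => exact ⟨ha_init ▸ ha0, hb_init ▸ hb0⟩
    | succ n ih =>
      obtain ⟨h1, h2⟩ := hrec n
      have e1 : (0:ℝ) ≤ c * w * max (x (n+1) - μ n) 0 :=
        mul_nonneg hcw.le (le_max_right _ _)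
      have e2 : (0:ℝ) ≤ d * w * max (μ n - x (n+1)) 0 :=
        mul_nonneg hdw.le (le_max_right _ _)
      exact ⟨by rw [h1]; linarith [ih.1], by rw [h2]; linarith [ih.2]⟩
  have hapos : ∀ k, 0 < a k := fun k => (hpos k).1
  have hbpos : ∀ k, 0 < b k := fun k => (hpos k).2
  have hspos : ∀ k, 0 < a k + b k := fun k => by linarith [hapos k, hbpos k]
  have hμpos : ∀ k, 0 < μ k := fun k => div_pos (hapos k) (hspos k)
  have hμlt1 : ∀ k, μ k < 1 := fun k => by
    rw [← hμ, div_lt_one (hspos k)]; linarith [hbpos k]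
  have hxmem : ∀ k : ℕ, 0 ≤ x (k+1) ∧ x (k+1) ≤ 1 := fun k => hx_mem (k+1) (by omega)
  have hstep : ∀ k : ℕ,
      (μ k ≤ x (k+1) → a (k+1) = a k + c*w*(x (k+1) - μ k) ∧ b (k+1) = b k) ∧
      (x (k+1) ≤ μ k → a (k+1) = a k ∧ b (k+1) = b k + d*w*(μ k - x (k+1))) := by
    intro k
    obtain ⟨h1, h2⟩ := hrec k
    constructor
    · intro h
      rw [max_eq_left (by linarith)] at h1
      rw [max_eq_right (by linarith)] at h2
      exact ⟨h1, by rw [h2, mul_zero, add_zero]⟩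
    · intro h
      rw [max_eq_right (by linarith)] at h1
      rw [max_eq_left (by linarith)] at h2
      exact ⟨by rw [h1, mul_zero, add_zero], h2⟩
  have hsmono : Monotone (fun k => a k + b k) := by
    apply monotone_nat_of_le_succ
    intro k
    obtain ⟨h1, h2⟩ := hrec k
    have e1 : (0:ℝ) ≤ c * w * max (x (k+1) - μ k) 0 :=
      mul_nonneg hcw.le (le_max_right _ _)
    have e2 : (0:ℝ) ≤ d * w * max (μ k - x (k+1)) 0 :=
      mul_nonneg hdw.le (le_max_right _ _)
    rw [h1, h2]; linarith
  by_cases hcase : ∀ k, a k + b k < c*w + d*w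
  · -- bounded case: s converges, increments vanish, so |x (k+1) - μ k| → 0
    have hbdd : BddAbove (Set.range fun k => a k + b k) := by
      refine ⟨c*w + d*w, ?_⟩
      rintro y ⟨k, rfl⟩
      exact (hcase k).le
    have hconv : Tendsto (fun k => a k + b k) atTop (nhds (⨆ k, a k + b k)) :=
      tendsto_atTop_ciSup hsmono hbdd
    have hshift : Tendsto (fun k => a (k+1) + b (k+1)) atTop (nhds (⨆ k, a k + b k)) := by
      have := hconv.comp (tendsto_add_atTop_nat 1)
      simpa [Function.comp_def] using this
    have hdiff0 : Tendsto (fun k => (a (k+1) + b (k+1)) - (a k + b k)) atTop (nhds 0) := by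
      have := hshift.sub hconv
      simpa using this
    set mcd : ℝ := min (c*w) (d*w) with hmcd
    have hmcdpos : 0 < mcd := lt_min hcw hdw
    have hgap : ∀ k : ℕ, |x (k+1) - μ k| ≤
        (1/mcd) * ((a (k+1) + b (k+1)) - (a k + b k)) := by
      intro k
      obtain ⟨h1, h2⟩ := hrec k
      have hd1 : (a (k+1) + b (k+1)) - (a k + b k)
          = c*w*max (x (k+1) - μ k) 0 + d*w*max (μ k - x (k+1)) 0 := by
        rw [h1, h2]; ring
      rw [hd1]
      rcases le_total (x (k+1)) (μ k) with h | h
      · rw [abs_of_nonpos (by linarith), max_eq_right (by linarith),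
          max_eq_left (by linarith), mul_zero]
        have h3 : mcd * (μ k - x (k+1)) ≤ d*w*(μ k - x (k+1)) :=
          mul_le_mul_of_nonneg_right (min_le_right _ _) (by linarith)
        rw [div_mul_eq_mul_div, le_div_iff₀ hmcdpos]
        nlinarith
      · rw [abs_of_nonneg (by linarith), max_eq_left (by linarith),
          max_eq_right (by linarith), mul_zero]
        have h3 : mcd * (x (k+1) - μ k) ≤ c*w*(x (k+1) - μ k) :=
          mul_le_mul_of_nonneg_right (min_le_left _ _) (by linarith)
        rw [div_mul_eq_mul_div, le_div_iff₀ hmcdpos]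
        nlinarith
    have hbound0 : Tendsto (fun k => (1/mcd) * ((a (k+1) + b (k+1)) - (a k + b k)))
        atTop (nhds 0) := by
      have := hdiff0.const_mul (1/mcd)
      simpa using this
    have hbneg : Tendsto (fun k => -((1/mcd) * ((a (k+1) + b (k+1)) - (a k + b k))))
        atTop (nhds 0) := by
      have h := hbound0.neg
      rw [neg_zero] at h
      exact h
    have hzero : Tendsto (fun k => x (k+1) - μ k) atTop (nhds 0) := by
      apply tendsto_of_tendsto_of_tendsto_of_le_of_le hbneg hbound0
      · intro k; exact (abs_le.mp (hgap k)).1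
      · intro k; exact (abs_le.mp (hgap k)).2
    have hxshift : Tendsto (fun k => x (k+1)) atTop (nhds L) := by
      have := hx_lim.comp (tendsto_add_atTop_nat 1)
      simpa [Function.comp_def] using this
    have hfin := hxshift.sub hzero
    have heq : (fun k => x (k+1) - (x (k+1) - μ k)) = μ := by
      funext k; ring
    rw [heq] at hfin
    simpa using hfin
  · -- unbounded case
    push_neg at hcase
    obtain ⟨N0, hN0⟩ := hcase
    have hs0 : ∀ k, a0 + b0 ≤ a k + b k := by
      intro k
      have := hsmono (Nat.zero_le k)
      simpa [ha_init, hb_init] using this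
    have hsab : 0 < a0 + b0 := by linarith
    have main : ∀ ε : ℝ, 0 < ε → ∃ N, ∀ n, N ≤ n → |μ n - L| ≤ ε := by
      intro ε hε
      obtain ⟨N1, hN1⟩ := (Metric.tendsto_atTop.mp hx_lim) (ε/2) (by positivity)
      set N := max N0 N1 with hN
      have hsge : ∀ k, N ≤ k → c*w + d*w ≤ a k + b k := fun k hk =>
        hN0.trans (hsmono ((le_max_left N0 N1).trans hk))
      have hx' : ∀ k, N ≤ k → L - ε/2 ≤ x (k+1) ∧ x (k+1) ≤ L + ε/2 := by
        intro k hk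
        have h := hN1 (k+1) (by omega)
        rw [Real.dist_eq] at h
        constructor <;> [linarith [(abs_lt.mp h).1]; linarith [(abs_lt.mp h).2]]
      -- invariance of the band
      have hinv : ∀ k, N ≤ k → |μ k - L| ≤ ε → |μ (k+1) - L| ≤ ε := by
        intro k hk hband
        rw [abs_le] at hband ⊢
        obtain ⟨hx1, hx2⟩ := hx' k hk
        rcases le_total (μ k) (x (k+1)) with h | h
        · obtain ⟨e1, e2⟩ := (hstep k).1 h
          have hμk1 : μ (k+1) = (a k + c*w*(x (k+1) - μ k)) /
              (a k + c*w*(x (k+1) - μ k) + b k) := by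
            rw [← hμ, e1, e2]
          have hlow : μ k ≤ μ (k+1) := by
            rw [hμk1, ← hμ]
            exact aux_up_mono (hapos k) (hbpos k) (mul_nonneg hcw.le (by linarith))
          have hhigh : μ (k+1) ≤ x (k+1) := by
            rw [hμk1]
            exact aux_up_cap (hapos k) (hbpos k) hcw.le
              (le_trans (by linarith) (hsge k hk)) (hxmem k).1 (hxmem k).2 h
          constructor <;> linarith [hband.1, hband.2]
        · obtain ⟨e1, e2⟩ := (hstep k).2 h
          have hμk1 : μ (k+1) = a k / (a k + (b k + d*w*(μ k - x (k+1)))) := by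
            rw [← hμ, e1, e2]
          have hlow : x (k+1) ≤ μ (k+1) := by
            rw [hμk1]
            exact aux_down_cap (hapos k) (hbpos k) hdw.le
              (le_trans (by linarith) (hsge k hk)) (hxmem k).1 h
          have hhigh : μ (k+1) ≤ μ k := by
            rw [hμk1, ← hμ]
            exact aux_down_mono (hapos k) (hbpos k) (mul_nonneg hdw.le (by linarith))
          constructor <;> linarith [hband.1, hband.2]
      -- entrance into the band
      have hent : ∃ k, N ≤ k ∧ |μ k - L| ≤ ε := by
        by_contra hno
        push_neg at hno
        have hout : ∀ k, N ≤ k → ε < |μ k - L| := fun k hk => hno k hk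
        rcases lt_abs.mp (hout N le_rfl) with hup | hdn
        · -- stays above the band forever, drifts down unboundedly : contradiction
          have habove : ∀ j : ℕ, L + ε < μ (N + j) := by
            intro j
            induction j with
            | zero => rw [Nat.add_zero]; linarith
            | succ n ih =>
              have hkN : N ≤ N + n := Nat.le_add_right N n
              obtain ⟨hx1, hx2⟩ := hx' (N+n) hkN
              have hxm : x (N+n+1) ≤ μ (N+n) := by linarith
              obtain ⟨e1, e2⟩ := (hstep (N+n)).2 hxm
              have hμk1 : μ (N+n+1) = a (N+n) /
                  (a (N+n) + (b (N+n) + d*w*(μ (N+n) - x (N+n+1)))) := by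
                rw [← hμ, e1, e2]
              have hlow : x (N+n+1) ≤ μ (N+n+1) := by
                rw [hμk1]
                exact aux_down_cap (hapos _) (hbpos _) hdw.le
                  (le_trans (by linarith) (hsge _ hkN)) (hxmem _).1 hxm
              have hout' := hout (N+n+1) (by omega)
              rcases lt_abs.mp hout' with h | h
              · have : N + (n+1) = N + n + 1 := by omega
                rw [this]; linarith
              · exfalso; linarith
          set K : ℝ := (a0 + b0) / ((a0 + b0) + d*w) with hK
          have hKpos : 0 < K := div_pos hsab (by linarith)
          have hLK : 0 < L * K := mul_pos hL0 hKpos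
          set η : ℝ := d*w*(ε/2) with hη
          have hηpos : 0 < η := by positivity
          have hstepj : ∀ j : ℕ,
              L * K * (Real.log (a (N+j+1) + b (N+j+1)) - Real.log (a (N+j) + b (N+j)))
                ≤ μ (N+j) - μ (N+j+1) ∧
              (a (N+j) + b (N+j)) + η ≤ a (N+j+1) + b (N+j+1) := by
            intro j
            have hkN : N ≤ N + j := Nat.le_add_right N j
            obtain ⟨hx1, hx2⟩ := hx' (N+j) hkN
            have hμk := habove j
            have hxm : x (N+j+1) ≤ μ (N+j) := by linarith
            obtain ⟨e1, e2⟩ := (hstep (N+j)).2 hxm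
            have hδ0 : 0 ≤ d*w*(μ (N+j) - x (N+j+1)) := mul_nonneg hdw.le (by linarith)
            have hδD : d*w*(μ (N+j) - x (N+j+1)) ≤ d*w := by
              have h1 := hμlt1 (N+j)
              have h2 := (hxmem (N+j)).1
              nlinarith
            have hLμ : L ≤ a (N+j) / (a (N+j) + b (N+j)) := by rw [hμ]; linarith
            have hdrift := aux_down_drift (hapos (N+j)) (hbpos (N+j)) hδ0 hδD hsab
              (hs0 (N+j)) hL0.le hLμ
            constructor
            · have hμeq : μ (N+j+1) = a (N+j) /
                  (a (N+j) + (b (N+j) + d*w*(μ (N+j) - x (N+j+1)))) := by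
                rw [← hμ, e1, e2]
              have hseq : a (N+j+1) + b (N+j+1)
                  = a (N+j) + (b (N+j) + d*w*(μ (N+j) - x (N+j+1))) := by
                rw [e1, e2]
              rw [hμeq, hseq, ← hμ (N+j)]
              exact hdrift
            · have hδε : η ≤ d*w*(μ (N+j) - x (N+j+1)) := by
                rw [hη]
                apply mul_le_mul_of_nonneg_left (by linarith) hdw.le
              rw [e1, e2]; linarith
          have tele : ∀ j : ℕ,
              L * K * (Real.log (a (N+j) + b (N+j)) - Real.log (a N + b N))
                ≤ μ N - μ (N+j) := by
            intro j
            induction j with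
            | zero => simp
            | succ n ih =>
              have h := (hstepj n).1
              have hidx : N + (n+1) = N + n + 1 := by omega
              rw [hidx]
              linarith
          have grow : ∀ j : ℕ, (a N + b N) + (j:ℝ) * η ≤ a (N+j) + b (N+j) := by
            intro j
            induction j with
            | zero => simp
            | succ n ih =>
              have h := (hstepj n).2
              have hidx : N + (n+1) = N + n + 1 := by omega
              rw [hidx]
              push_cast
              linarith
          have htend : Tendsto (fun j : ℕ => Real.log ((a N + b N) + (j:ℝ) * η))
              atTop atTop := by
            apply Real.tendsto_log_atTop.comp
            apply tendsto_atTop_add_const_left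
            exact Tendsto.atTop_mul_const hηpos tendsto_natCast_atTop_atTop
          obtain ⟨j, hj⟩ :=
            (htend.eventually_gt_atTop (Real.log (a N + b N) + 1/(L*K))).exists
          have hlog : Real.log ((a N + b N) + (j:ℝ)*η) ≤ Real.log (a (N+j) + b (N+j)) :=
            by
            have h := hspos N
            have h2 : (0:ℝ) ≤ (j:ℝ)*η := by positivity
            exact Real.log_le_log (by linarith) (grow j)
          have hcontr : (1:ℝ) < μ N - μ (N+j) := by
            have e : L*K*(1/(L*K)) = 1 := by field_simp
            calc (1:ℝ) = L*K*(1/(L*K)) := e.symm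
              _ < L*K*(Real.log (a (N+j) + b (N+j)) - Real.log (a N + b N)) := by
                  exact mul_lt_mul_of_pos_left (by linarith) hLK
              _ ≤ μ N - μ (N+j) := tele j
          linarith [hμlt1 N, hμpos (N+j)]
        · -- stays below the band forever, drifts up unboundedly : contradiction
          have hbelow : ∀ j : ℕ, μ (N + j) < L - ε := by
            intro j
            induction j with
            | zero => rw [Nat.add_zero]; linarith
            | succ n ih =>
              have hkN : N ≤ N + n := Nat.le_add_right N n
              obtain ⟨hx1, hx2⟩ := hx' (N+n) hkN
              have hxm : μ (N+n) ≤ x (N+n+1) := by linarith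
              obtain ⟨e1, e2⟩ := (hstep (N+n)).1 hxm
              have hμk1 : μ (N+n+1) = (a (N+n) + c*w*(x (N+n+1) - μ (N+n))) /
                  (a (N+n) + c*w*(x (N+n+1) - μ (N+n)) + b (N+n)) := by
                rw [← hμ, e1, e2]
              have hhigh : μ (N+n+1) ≤ x (N+n+1) := by
                rw [hμk1]
                exact aux_up_cap (hapos _) (hbpos _) hcw.le
                  (le_trans (by linarith) (hsge _ hkN)) (hxmem _).1 (hxmem _).2 hxm
              have hout' := hout (N+n+1) (by omega)
              rcases lt_abs.mp hout' with h | h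
              · exfalso; linarith
              · have : N + (n+1) = N + n + 1 := by omega
                rw [this]; linarith
          set K : ℝ := (a0 + b0) / ((a0 + b0) + c*w) with hK
          have hKpos : 0 < K := div_pos hsab (by linarith)
          have hLK : 0 < (1-L) * K := mul_pos (by linarith) hKpos
          set η : ℝ := c*w*(ε/2) with hη
          have hηpos : 0 < η := by positivity
          have hstepj : ∀ j : ℕ,
              (1-L) * K * (Real.log (a (N+j+1) + b (N+j+1)) - Real.log (a (N+j) + b (N+j)))
                ≤ μ (N+j+1) - μ (N+j) ∧
              (a (N+j) + b (N+j)) + η ≤ a (N+j+1) + b (N+j+1) := by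
            intro j
            have hkN : N ≤ N + j := Nat.le_add_right N j
            obtain ⟨hx1, hx2⟩ := hx' (N+j) hkN
            have hμk := hbelow j
            have hxm : μ (N+j) ≤ x (N+j+1) := by linarith
            obtain ⟨e1, e2⟩ := (hstep (N+j)).1 hxm
            have hδ0 : 0 ≤ c*w*(x (N+j+1) - μ (N+j)) := mul_nonneg hcw.le (by linarith)
            have hδD : c*w*(x (N+j+1) - μ (N+j)) ≤ c*w := by
              have h1 := hμpos (N+j)
              have h2 := (hxmem (N+j)).2
              nlinarith
            have hLμ : a (N+j) / (a (N+j) + b (N+j)) ≤ L := by rw [hμ]; linarith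
            have hdrift := aux_up_drift (hapos (N+j)) (hbpos (N+j)) hδ0 hδD hsab
              (hs0 (N+j)) hLμ hL1.le
            constructor
            · have hμeq : μ (N+j+1) = (a (N+j) + c*w*(x (N+j+1) - μ (N+j))) /
                  (a (N+j) + c*w*(x (N+j+1) - μ (N+j)) + b (N+j)) := by
                rw [← hμ, e1, e2]
              have hseq : a (N+j+1) + b (N+j+1)
                  = a (N+j) + c*w*(x (N+j+1) - μ (N+j)) + b (N+j) := by
                rw [e1, e2]
              rw [hμeq, hseq, ← hμ (N+j)]
              exact hdrift
            · have hδε : η ≤ c*w*(x (N+j+1) - μ (N+j)) := by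
                rw [hη]
                apply mul_le_mul_of_nonneg_left (by linarith) hcw.le
              rw [e1, e2]; linarith
          have tele : ∀ j : ℕ,
              (1-L) * K * (Real.log (a (N+j) + b (N+j)) - Real.log (a N + b N))
                ≤ μ (N+j) - μ N := by
            intro j
            induction j with
            | zero => simp
            | succ n ih =>
              have h := (hstepj n).1
              have hidx : N + (n+1) = N + n + 1 := by omega
              rw [hidx]
              linarith
          have grow : ∀ j : ℕ, (a N + b N) + (j:ℝ) * η ≤ a (N+j) + b (N+j) := by
            intro j
            induction j with
            | zero => simp
            | succ n ih =>
              have h := (hstepj n).2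
              have hidx : N + (n+1) = N + n + 1 := by omega
              rw [hidx]
              push_cast
              linarith
          have htend : Tendsto (fun j : ℕ => Real.log ((a N + b N) + (j:ℝ) * η))
              atTop atTop := by
            apply Real.tendsto_log_atTop.comp
            apply tendsto_atTop_add_const_left
            exact Tendsto.atTop_mul_const hηpos tendsto_natCast_atTop_atTop
          obtain ⟨j, hj⟩ :=
            (htend.eventually_gt_atTop (Real.log (a N + b N) + 1/((1-L)*K))).exists
          have hlog : Real.log ((a N + b N) + (j:ℝ)*η) ≤ Real.log (a (N+j) + b (N+j)) :=
            by
            have h := hspos N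
            have h2 : (0:ℝ) ≤ (j:ℝ)*η := by positivity
            exact Real.log_le_log (by linarith) (grow j)
          have hcontr : (1:ℝ) < μ (N+j) - μ N := by
            have e : (1-L)*K*(1/((1-L)*K)) = 1 := by field_simp
            calc (1:ℝ) = (1-L)*K*(1/((1-L)*K)) := e.symm
              _ < (1-L)*K*(Real.log (a (N+j) + b (N+j)) - Real.log (a N + b N)) := by
                  exact mul_lt_mul_of_pos_left (by linarith) hLK
              _ ≤ μ (N+j) - μ N := tele j
          linarith [hμlt1 (N+j), hμpos N]
      obtain ⟨k0, hk0N, hk0⟩ := hent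
      refine ⟨k0, ?_⟩
      intro n hn
      obtain ⟨j, rfl⟩ := Nat.exists_eq_add_of_le hn
      clear hn
      induction j with
      | zero => simpa using hk0
      | succ m ih =>
        have hk : N ≤ k0 + m := le_trans hk0N (Nat.le_add_right _ _)
        have hidx : k0 + (m+1) = (k0 + m) + 1 := by omega
        rw [hidx]
        exact hinv (k0 + m) hk ih
    rw [Metric.tendsto_atTop]
    intro ε hε
    obtain ⟨N, hN⟩ := main (ε/2) (by positivity)
    refine ⟨N, fun n hn => ?_⟩
    rw [Real.dist_eq]
    calc |μ n - L| ≤ ε/2 := hN n hn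
      _ < ε := by linarith
end

section
/- Let S^x, F^x, F̂^x, Ŝ^y, S^y, F^y be strictly positive real constants with S^x·F^y ≥ F^x·S^y. Then there exists exactly one pair (u, v) ∈ (0,1) × (0,1) with u ≥ v satisfying the system S^x·(1−u)/u = F̂^x·(u−v) + F^x and F^y·v/(1−v) = Ŝ^y·(u−v) + S^y. -/
/-- **Existence and uniqueness of the TIP equilibrium (case `Sˣ·Fʸ ≥ Fˣ·Sʸ`).**
There is exactly one pair `(u, v) ∈ (0,1) × (0,1)` with `u ≥ v` satisfying the system
`Sˣ·(1−u)/u = F̂ˣ·(u−v) + Fˣ` and `Fʸ·v/(1−v) = Ŝʸ·(u−v) + Sʸ`. -/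
theorem tip_equilibrium_exists_unique
    (Sx Fx Fxh Syh Sy Fy : ℝ)
    (hSx : 0 < Sx) (hFx : 0 < Fx) (hFxh : 0 < Fxh) (hSyh : 0 < Syh)
    (hSy : 0 < Sy) (hFy : 0 < Fy)
    (hcase : Sx * Fy ≥ Fx * Sy) :
    ∃! p : ℝ × ℝ,
      p.1 ∈ Set.Ioo (0 : ℝ) 1 ∧ p.2 ∈ Set.Ioo (0 : ℝ) 1 ∧ p.2 ≤ p.1 ∧
      Sx * ((1 - p.1) / p.1) = Fxh * (p.1 - p.2) + Fx ∧
      Fy * (p.2 / (1 - p.2)) = Syh * (p.1 - p.2) + Sy := by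
  set h : ℝ → ℝ := fun w => w - Sx / (Sx + Fx + Fxh * w) + (Sy + Syh * w) / (Fy + Sy + Syh * w)
    with hh
  have hApos : ∀ w : ℝ, 0 ≤ w → 0 < Sx + Fx + Fxh * w := by
    intro w hw
    have := mul_nonneg hFxh.le hw
    linarith
  have hBpos : ∀ w : ℝ, 0 ≤ w → 0 < Fy + Sy + Syh * w := by
    intro w hw
    have := mul_nonneg hSyh.le hw
    linarith
  -- strict monotonicity of h on [0,∞)
  have hmono : StrictMonoOn h (Set.Ici (0:ℝ)) := by
    intro a ha b hb hab
    simp only [Set.mem_Ici] at ha hb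
    have hAa := hApos a ha
    have hAb := hApos b hb
    have hBa := hBpos a ha
    have hBb := hBpos b hb
    have h1 : Sx / (Sx + Fx + Fxh * b) ≤ Sx / (Sx + Fx + Fxh * a) := by
      rw [div_le_div_iff₀ hAb hAa]
      nlinarith [mul_nonneg (mul_nonneg hSx.le hFxh.le) (sub_nonneg.2 hab.le)]
    have h2 : (Sy + Syh * a) / (Fy + Sy + Syh * a) ≤ (Sy + Syh * b) / (Fy + Sy + Syh * b) := by
      rw [div_le_div_iff₀ hBa hBb]
      nlinarith [mul_nonneg (mul_nonneg hFy.le hSyh.le) (sub_nonneg.2 hab.le)]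
    simp only [hh]
    linarith
  -- continuity of h on [0,1]
  have hcont : ContinuousOn h (Set.Icc (0:ℝ) 1) := by
    apply ContinuousOn.add
    · apply ContinuousOn.sub continuousOn_id
      exact ContinuousOn.div continuousOn_const (by fun_prop)
        (fun w hw => (hApos w hw.1).ne')
    · exact ContinuousOn.div (by fun_prop) (by fun_prop)
        (fun w hw => (hBpos w hw.1).ne')
  -- endpoint values
  have hh0 : h 0 ≤ 0 := by
    have key : Sy / (Fy + Sy) ≤ Sx / (Sx + Fx) := by
      rw [div_le_div_iff₀ (by linarith) (by linarith)]
      nlinarith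
    simp only [hh]
    norm_num
    linarith
  have hh1 : 0 < h 1 := by
    have h1 : Sx / (Sx + Fx + Fxh * 1) < 1 := by
      rw [div_lt_one (hApos 1 zero_le_one)]; linarith
    have h2 : 0 < (Sy + Syh * 1) / (Fy + Sy + Syh * 1) :=
      div_pos (by linarith) (hBpos 1 zero_le_one)
    simp only [hh]
    linarith
  -- existence of root w ∈ [0,1)
  obtain ⟨w, hwmem, hwroot⟩ : ∃ w ∈ Set.Icc (0:ℝ) 1, h w = 0 := by
    have := intermediate_value_Icc (zero_le_one) hcont
    have h0 : (0:ℝ) ∈ Set.Icc (h 0) (h 1) := ⟨hh0, hh1.le⟩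
    obtain ⟨w, hw1, hw2⟩ := this h0
    exact ⟨w, hw1, hw2⟩
  obtain ⟨hw0, hw1'⟩ := hwmem
  have hAw := hApos w hw0
  have hBw := hBpos w hw0
  set u : ℝ := Sx / (Sx + Fx + Fxh * w) with hu
  set v : ℝ := (Sy + Syh * w) / (Fy + Sy + Syh * w) with hv
  have huv : u - v = w := by
    have : w - u + v = 0 := hwroot
    linarith
  have hu0 : 0 < u := div_pos hSx hAw
  have hu1 : u < 1 := by
    rw [hu, div_lt_one hAw]
    have := mul_nonneg hFxh.le hw0
    linarith
  have hv0 : 0 < v := div_pos (by nlinarith [mul_nonneg hSyh.le hw0]) hBw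
  have hv1 : v < 1 := by
    rw [hv, div_lt_one hBw]; linarith
  refine ⟨(u, v), ⟨⟨hu0, hu1⟩, ⟨hv0, hv1⟩, by simp; linarith, ?_, ?_⟩, ?_⟩
  · show Sx * ((1 - u) / u) = Fxh * (u - v) + Fx
    rw [huv, hu]
    field_simp
    ring
  · show Fy * (v / (1 - v)) = Syh * (u - v) + Sy
    rw [huv]
    have h1v : 1 - v = Fy / (Fy + Sy + Syh * w) := by
      rw [hv]; field_simp; ring
    rw [h1v, hv]
    field_simp
    ring
  · rintro ⟨a, b⟩ ⟨⟨ha0, ha1⟩, ⟨hb0, hb1⟩, hba, he1, he2⟩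
    simp only at ha0 ha1 hb0 hb1 hba he1 he2
    have hwq0 : (0:ℝ) ≤ a - b := by linarith
    have hAq := hApos _ hwq0
    have hBq := hBpos _ hwq0
    have h1b : (1:ℝ) - b ≠ 0 := sub_ne_zero.2 (by linarith)
    have he1' : Sx * (1 - a) = (Fxh * (a - b) + Fx) * a := by
      field_simp at he1
      linarith [he1]
    have he2' : Fy * b = (Syh * (a - b) + Sy) * (1 - b) := by
      field_simp [h1b] at he2
      linarith [he2]
    have ha : a = Sx / (Sx + Fx + Fxh * (a - b)) := by
      rw [eq_div_iff hAq.ne']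
      linear_combination -he1'
    have hb : b = (Sy + Syh * (a - b)) / (Fy + Sy + Syh * (a - b)) := by
      rw [eq_div_iff hBq.ne']
      linear_combination he2'
    have hroot : h (a - b) = 0 := by
      simp only [hh]
      rw [← ha, ← hb]
      ring
    have hww : a - b = w :=
      hmono.injOn (Set.mem_Ici.2 hwq0) (Set.mem_Ici.2 hw0) (by rw [hroot, hwroot])
    have ha' : a = u := by rw [ha, hww]
    have hb' : b = v := by rw [hb, hww]
    simp only [Prod.mk.injEq]
    exact ⟨ha', hb'⟩
end

section
/- The function (α, β) ↦ log Γ(α) + log Γ(β) − log Γ(α+β) (the logarithm of the Beta function B(α,β)) is convex on the set {(α,β) ∈ ℝ² : α > 0, β > 0}. Equivalently, for every fixed t ∈ (0,1), the log-density (α, β) ↦ (α−1)·log t + (β−1)·log(1−t) − log B(α,β) of the Beta(α,β) distribution at t is a concave function of (α,β) on {α > 0, β > 0}. -/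
open MeasureTheory Set Real

noncomputable def betaFn (a b : ℝ) : ℝ :=
  ∫ x in Set.Ioo (0:ℝ) 1, x ^ (a - 1) * (1 - x) ^ (b - 1)

lemma betaFn_eq {a b : ℝ} (ha : 0 < a) (hb : 0 < b) :
    betaFn a b = Real.Gamma a * Real.Gamma b / Real.Gamma (a + b) := by
  have hca : ((a : ℂ) - 1) = ((a - 1 : ℝ) : ℂ) := by push_cast; ring
  have hcb : ((b : ℂ) - 1) = ((b - 1 : ℝ) : ℂ) := by push_cast; ring
  have h1 : Complex.betaIntegral a b = ((betaFn a b : ℝ) : ℂ) := by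
    rw [Complex.betaIntegral, intervalIntegral.integral_of_le zero_le_one,
      MeasureTheory.integral_Ioc_eq_integral_Ioo]
    rw [show ((betaFn a b : ℝ) : ℂ) = ∫ x in Set.Ioo (0:ℝ) 1,
        ((x ^ (a - 1) * (1 - x) ^ (b - 1) : ℝ) : ℂ) from (integral_ofReal).symm]
    refine setIntegral_congr_fun measurableSet_Ioo fun x hx => ?_
    have hx0 : (0:ℝ) ≤ x := hx.1.le
    have hx1 : (0:ℝ) ≤ 1 - x := by linarith [hx.2]
    rw [hca, hcb, show (1 - (x:ℂ)) = ((1 - x : ℝ) : ℂ) by push_cast; ring,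
      ← Complex.ofReal_cpow hx0, ← Complex.ofReal_cpow hx1]
    push_cast
    ring
  have h2 := Complex.Gamma_mul_Gamma_eq_betaIntegral
    (s := (a : ℂ)) (t := (b : ℂ)) (by simpa using ha) (by simpa using hb)
  rw [h1, show ((a:ℂ) + b) = ((a + b : ℝ) : ℂ) by push_cast; ring] at h2
  simp only [Complex.Gamma_ofReal] at h2
  have h3 : Real.Gamma a * Real.Gamma b = Real.Gamma (a + b) * betaFn a b := by
    exact_mod_cast h2
  have hpos : Real.Gamma (a + b) ≠ 0 := (Real.Gamma_pos_of_pos (by linarith)).ne'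
  field_simp [hpos] at h3 ⊢
  linarith [h3]

lemma betaFn_pos {a b : ℝ} (ha : 0 < a) (hb : 0 < b) : 0 < betaFn a b := by
  rw [betaFn_eq ha hb]
  have := Real.Gamma_pos_of_pos ha
  have := Real.Gamma_pos_of_pos hb
  have := Real.Gamma_pos_of_pos (show (0:ℝ) < a + b by linarith)
  positivity

lemma integrableOn_betaIntegrand {a b : ℝ} (ha : 0 < a) (hb : 0 < b) :
    IntegrableOn (fun x : ℝ => x ^ (a - 1) * (1 - x) ^ (b - 1)) (Set.Ioo 0 1) := by
  have h := Complex.betaIntegral_convergent (u := (a : ℂ)) (v := (b : ℂ))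
    (by simpa using ha) (by simpa using hb)
  rw [intervalIntegrable_iff_integrableOn_Ioc_of_le zero_le_one] at h
  have h' := (h.mono_set Set.Ioo_subset_Ioc_self).re
  refine h'.congr (Filter.eventuallyEq_of_mem (self_mem_ae_restrict measurableSet_Ioo)
    fun x hx => ?_)
  have hx0 : (0:ℝ) ≤ x := hx.1.le
  have hx1 : (0:ℝ) ≤ 1 - x := by linarith [hx.2]
  simp only [RCLike.re_to_complex]
  rw [show ((a : ℂ) - 1) = ((a - 1 : ℝ) : ℂ) by push_cast; ring,
    show ((b : ℂ) - 1) = ((b - 1 : ℝ) : ℂ) by push_cast; ring,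
    show (1 - (x:ℂ)) = ((1 - x : ℝ) : ℂ) by push_cast; ring,
    ← Complex.ofReal_cpow hx0, ← Complex.ofReal_cpow hx1, ← Complex.ofReal_mul,
    Complex.ofReal_re]

/-- Hölder inequality for the Beta integral, multiplicative form. -/
lemma betaFn_holder {s1 t1 s2 t2 a b : ℝ} (hs1 : 0 < s1) (ht1 : 0 < t1)
    (hs2 : 0 < s2) (ht2 : 0 < t2) (ha : 0 < a) (hb : 0 < b) (hab : a + b = 1) :
    betaFn (a * s1 + b * s2) (a * t1 + b * t2) ≤
      betaFn s1 t1 ^ a * betaFn s2 t2 ^ b := by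
  let f : ℝ → ℝ → ℝ → ℝ → ℝ := fun c s t x => x ^ (c * (s - 1)) * (1 - x) ^ (c * (t - 1))
  have e : (1 / a).HolderConjugate (1 / b) := Real.holderConjugate_one_div ha hb hab
  have posf : ∀ c s t x : ℝ, x ∈ Set.Ioo (0:ℝ) 1 → 0 ≤ f c s t x := fun c s t x hx =>
    mul_nonneg (rpow_nonneg hx.1.le _) (rpow_nonneg (by linarith [hx.2]) _)
  have posf' : ∀ c s t : ℝ, ∀ᵐ x : ℝ ∂volume.restrict (Set.Ioo 0 1), 0 ≤ f c s t x :=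
    fun c s t => (ae_restrict_iff' measurableSet_Ioo).mpr (ae_of_all _ (posf c s t))
  have fpow : ∀ {c x : ℝ} (_ : 0 < c) (s t : ℝ) (_ : x ∈ Set.Ioo (0:ℝ) 1),
      x ^ (s - 1) * (1 - x) ^ (t - 1) = f c s t x ^ (1 / c) := by
    intro c x hc s t hx
    have hx1 : (0:ℝ) ≤ 1 - x := by linarith [hx.2]
    dsimp only [f]
    rw [mul_rpow (rpow_nonneg hx.1.le _) (rpow_nonneg hx1 _), ← rpow_mul hx.1.le,
      ← rpow_mul hx1]
    congr 2 <;> field_simp [hc.ne']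
  have cont : ∀ c s t : ℝ,
      AEStronglyMeasurable (f c s t) (volume.restrict (Set.Ioo 0 1)) := by
    intro c s t
    refine ContinuousOn.aestronglyMeasurable ?_ measurableSet_Ioo
    refine ContinuousOn.mul ?_ ?_
    · exact continuousOn_id.rpow_const fun x hx => Or.inl hx.1.ne'
    · exact (continuousOn_const.sub continuousOn_id).rpow_const
        fun x hx => Or.inl (by simp only [Pi.sub_apply, id]; linarith [hx.2])
  have f_mem_Lp : ∀ {c s t : ℝ}, 0 < c → 0 < s → 0 < t →
      MemLp (f c s t) (ENNReal.ofReal (1 / c)) (volume.restrict (Set.Ioo 0 1)) := by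
    intro c s t hc hs ht
    have A : ENNReal.ofReal (1 / c) ≠ 0 := by
      rwa [Ne, ENNReal.ofReal_eq_zero, not_le, one_div_pos]
    have B : ENNReal.ofReal (1 / c) ≠ ⊤ := ENNReal.ofReal_ne_top
    rw [← memLp_norm_rpow_iff (cont c s t) A B,
      ENNReal.toReal_ofReal (one_div_nonneg.mpr hc.le), ENNReal.div_self A B,
      memLp_one_iff_integrable]
    apply Integrable.congr (integrableOn_betaIntegrand hs ht)
    refine Filter.eventuallyEq_of_mem (self_mem_ae_restrict measurableSet_Ioo) fun x hx => ?_
    rw [fpow hc s t hx]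
    congr 1
    exact (norm_of_nonneg (posf _ _ _ x hx)).symm
  unfold betaFn
  convert MeasureTheory.integral_mul_le_Lp_mul_Lq_of_nonneg e (posf' a s1 t1) (posf' b s2 t2)
    (f_mem_Lp ha hs1 ht1) (f_mem_Lp hb hs2 ht2) using 1
  · refine setIntegral_congr_fun measurableSet_Ioo fun x hx => ?_
    dsimp only [f]
    have hx1 : (0:ℝ) < 1 - x := by linarith [hx.2]
    rw [show x ^ (a * s1 + b * s2 - 1) = x ^ (a * (s1 - 1)) * x ^ (b * (s2 - 1)) by
        rw [← rpow_add hx.1]; congr 1; linarith,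
      show (1 - x) ^ (a * t1 + b * t2 - 1)
          = (1 - x) ^ (a * (t1 - 1)) * (1 - x) ^ (b * (t2 - 1)) by
        rw [← rpow_add hx1]; congr 1; linarith]
    ring
  · rw [one_div_one_div, one_div_one_div]
    congr 2 <;>
      exact setIntegral_congr_fun measurableSet_Ioo fun x hx => fpow (by assumption) _ _ hx

/-- **Log-convexity of the Beta function / log-concavity of the Beta density in its
parameters.** The function `(α, β) ↦ log B(α,β) = log Γ(α) + log Γ(β) − log Γ(α+β)` is
convex on the open positive quadrant; equivalently, for every fixed `t ∈ (0,1)` the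
log-density `(α, β) ↦ (α−1)·log t + (β−1)·log(1−t) − log B(α,β)` of the Beta(α,β)
distribution at `t` is concave there. -/
theorem logBetaFunction_convexOn_and_logBetaDensity_concaveOn :
    ConvexOn ℝ {p : ℝ × ℝ | 0 < p.1 ∧ 0 < p.2}
      (fun p : ℝ × ℝ =>
        Real.log (Real.Gamma p.1) + Real.log (Real.Gamma p.2)
          - Real.log (Real.Gamma (p.1 + p.2))) ∧
    ∀ t : ℝ, t ∈ Set.Ioo (0 : ℝ) 1 →
      ConcaveOn ℝ {p : ℝ × ℝ | 0 < p.1 ∧ 0 < p.2}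
        (fun p : ℝ × ℝ =>
          (p.1 - 1) * Real.log t + (p.2 - 1) * Real.log (1 - t)
            - (Real.log (Real.Gamma p.1) + Real.log (Real.Gamma p.2)
                - Real.log (Real.Gamma (p.1 + p.2)))) := by
  have hsconv : Convex ℝ {p : ℝ × ℝ | 0 < p.1 ∧ 0 < p.2} := by
    have : {p : ℝ × ℝ | 0 < p.1 ∧ 0 < p.2} = (Set.Ioi 0) ×ˢ (Set.Ioi 0) := rfl
    rw [this]; exact (convex_Ioi 0).prod (convex_Ioi 0)
  have logB : ∀ {a b : ℝ}, 0 < a → 0 < b →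
      Real.log (Real.Gamma a) + Real.log (Real.Gamma b) - Real.log (Real.Gamma (a + b))
        = Real.log (betaFn a b) := by
    intro a b ha hb
    rw [betaFn_eq ha hb, Real.log_div (mul_pos (Real.Gamma_pos_of_pos ha)
        (Real.Gamma_pos_of_pos hb)).ne' (Real.Gamma_pos_of_pos (by linarith : (0:ℝ) < a + b)).ne',
      Real.log_mul (Real.Gamma_pos_of_pos ha).ne' (Real.Gamma_pos_of_pos hb).ne']
  have hF : ConvexOn ℝ {p : ℝ × ℝ | 0 < p.1 ∧ 0 < p.2}
      (fun p : ℝ × ℝ =>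
        Real.log (Real.Gamma p.1) + Real.log (Real.Gamma p.2)
          - Real.log (Real.Gamma (p.1 + p.2))) := by
    refine convexOn_iff_forall_pos.mpr ⟨hsconv, fun x hx y hy a b ha hb hab => ?_⟩
    obtain ⟨hx1, hx2⟩ := hx
    obtain ⟨hy1, hy2⟩ := hy
    simp only [smul_eq_mul, Prod.fst_add, Prod.snd_add, Prod.smul_fst, Prod.smul_snd,
      smul_eq_mul]
    rw [logB hx1 hx2, logB hy1 hy2,
      logB (by positivity) (by positivity)]
    have B1 := betaFn_pos hx1 hx2
    have B2 := betaFn_pos hy1 hy2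
    rw [← Real.log_rpow B1, ← Real.log_rpow B2,
      ← Real.log_mul (Real.rpow_pos_of_pos B1 a).ne' (Real.rpow_pos_of_pos B2 b).ne']
    refine Real.log_le_log (betaFn_pos (by positivity) (by positivity)) ?_
    exact betaFn_holder hx1 hx2 hy1 hy2 ha hb hab
  refine ⟨hF, fun t ht => ?_⟩
  have hL : ConcaveOn ℝ {p : ℝ × ℝ | 0 < p.1 ∧ 0 < p.2}
      (fun p : ℝ × ℝ => (p.1 - 1) * Real.log t + (p.2 - 1) * Real.log (1 - t)) := by
    refine ⟨hsconv, fun x _ y _ a b _ _ hab => le_of_eq ?_⟩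
    simp only [smul_eq_mul, Prod.fst_add, Prod.snd_add, Prod.smul_fst, Prod.smul_snd,
      smul_eq_mul]
    have : a = 1 - b := by linarith
    subst this
    ring
  have := hL.add hF.neg
  convert this using 2 with p <;> rfl
end
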